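/- arXiv:1709.03062 — 2 statements merged into one kernel-verified Lean document; each statement's English description precedes it below -/
import Mathlib

section
/- Let (x_k), (y_k) be a DCA sequence for f = g − h. Assume f is bounded from below on ℝⁿ, g is γ₁-convex, h is γ₂-convex with γ₁ + γ₂ > 0, and the sequence (x_k) is bounded. Then every subsequential limit x̄ of (x_k) is a critical point of f, i.e., ∂g(x̄) ∩ ∂h(x̄) ≠ ∅. -/
open scoped RealInnerProductSpace
open Filter Metric

theorem strong_subgrad {n : ℕ} (h : EuclideanSpace ℝ (Fin n) → ℝ) (γ : ℝ)
    (hconv : ConvexOn ℝ Set.univ fun z : EuclideanSpace ℝ (Fin n) => h z - γ / 2 * ‖z‖ ^ 2)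
    (x v : EuclideanSpace ℝ (Fin n)) (hv : ∀ z, h x + ⟪v, z - x⟫ ≤ h z) (z : EuclideanSpace ℝ (Fin n)) :
    h x + ⟪v, z - x⟫ + γ / 2 * ‖z - x‖ ^ 2 ≤ h z := by
  have key : ∀ t ∈ Set.Ioo (0:ℝ) 1,
      ⟪v, z - x⟫ + γ * (1 - t) / 2 * ‖z - x‖ ^ 2 ≤ h z - h x := by
    rintro t ⟨ht0, ht1⟩
    have hc := hconv.2 (Set.mem_univ x) (Set.mem_univ z)
      (by linarith : (0:ℝ) ≤ 1 - t) ht0.le (by ring)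
    set c : EuclideanSpace ℝ (Fin n) := (1 - t) • x + t • z with hcdef
    have h1 : c - x = t • (z - x) := by
      rw [hcdef]; module
    have hs := hv c
    rw [h1, real_inner_smul_right] at hs
    simp only [smul_eq_mul] at hc
    have hc2 : ‖c‖ ^ 2 = (1-t)^2 * ⟪x,x⟫ + 2*(t*(1-t))*⟪x,z⟫ + t^2 * ⟪z,z⟫ := by
      rw [← real_inner_self_eq_norm_sq, hcdef]
      simp only [inner_add_left, inner_add_right, real_inner_smul_left, real_inner_smul_right,
        real_inner_comm z x]
      ring
    have hdn : ‖z - x‖ ^ 2 = ⟪z,z⟫ - 2*⟪x,z⟫ + ⟪x,x⟫ := by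
      rw [← real_inner_self_eq_norm_sq]
      simp only [inner_sub_left, inner_sub_right, real_inner_comm z x]
      ring
    have hx2 : ‖x‖ ^ 2 = ⟪x,x⟫ := (real_inner_self_eq_norm_sq x).symm
    have hz2 : ‖z‖ ^ 2 = ⟪z,z⟫ := (real_inner_self_eq_norm_sq z).symm
    rw [hx2, hz2, hc2] at hc
    rw [hdn]
    have hmul : t * (⟪v, z - x⟫ + γ * (1 - t) / 2 * (⟪z,z⟫ - 2*⟪x,z⟫ + ⟪x,x⟫) - (h z - h x)) ≤ t * 0 := by
      nlinarith [hs, hc]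
    linarith [le_of_mul_le_mul_left hmul ht0]
  have hcont : Filter.Tendsto (fun t : ℝ => ⟪v, z - x⟫ + γ * (1 - t) / 2 * ‖z - x‖ ^ 2)
      (nhdsWithin 0 (Set.Ioi 0)) (nhds (⟪v, z - x⟫ + γ * (1 - (0:ℝ)) / 2 * ‖z - x‖ ^ 2)) := by
    apply Filter.Tendsto.mono_left _ nhdsWithin_le_nhds
    refine Continuous.tendsto ?_ 0
    exact continuous_const.add (((continuous_const.mul (continuous_const.sub continuous_id)).div_const 2).mul continuous_const)
  have hle : ⟪v, z - x⟫ + γ * (1 - (0:ℝ)) / 2 * ‖z - x‖ ^ 2 ≤ h z - h x := by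
    refine le_of_tendsto hcont ?_
    filter_upwards [Ioo_mem_nhdsGT_of_mem (by norm_num : (0:ℝ) ∈ Set.Ico 0 1)] with t ht
    exact key t ht
  linarith


theorem stmt_4 {n : ℕ} (g h : EuclideanSpace ℝ (Fin n) → ℝ)
    (γ₁ γ₂ : ℝ) (hγ₁ : 0 ≤ γ₁) (hγ₂ : 0 ≤ γ₂) (hγ : 0 < γ₁ + γ₂)
    (hg : ConvexOn ℝ Set.univ fun z : EuclideanSpace ℝ (Fin n) => g z - γ₁ / 2 * ‖z‖ ^ 2)
    (hh : ConvexOn ℝ Set.univ fun z : EuclideanSpace ℝ (Fin n) => h z - γ₂ / 2 * ‖z‖ ^ 2)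
    (x y : ℕ → EuclideanSpace ℝ (Fin n))
    (hdca : ∀ k : ℕ, 1 ≤ k →
      (∀ z, h (x (k - 1)) + ⟪y k, z - x (k - 1)⟫ ≤ h z) ∧
      (∀ z, g (x k) + ⟪y k, z - x k⟫ ≤ g z))
    (hbdd : ∃ c : ℝ, ∀ z, c ≤ g z - h z)
    (hxbounded : Bornology.IsBounded (Set.range x))
    (xbar : EuclideanSpace ℝ (Fin n)) (φ : ℕ → ℕ) (hφ : StrictMono φ)
    (hlim : Filter.Tendsto (fun j => x (φ j)) Filter.atTop (nhds xbar)) :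
    ({v | ∀ z, g xbar + ⟪v, z - xbar⟫ ≤ g z} ∩
      {v | ∀ z, h xbar + ⟪v, z - xbar⟫ ≤ h z}).Nonempty := by
  -- continuity of g and h
  have hgc : Continuous g := by
    have h1 : Continuous fun z : EuclideanSpace ℝ (Fin n) => g z - γ₁ / 2 * ‖z‖ ^ 2 :=
      continuousOn_univ.1 (hg.continuousOn isOpen_univ)
    have h2 : Continuous fun z : EuclideanSpace ℝ (Fin n) => γ₁ / 2 * ‖z‖ ^ 2 := by fun_prop
    exact (h1.add h2).congr fun z => by simp
  have hhc : Continuous h := by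
    have h1 : Continuous fun z : EuclideanSpace ℝ (Fin n) => h z - γ₂ / 2 * ‖z‖ ^ 2 :=
      continuousOn_univ.1 (hh.continuousOn isOpen_univ)
    have h2 : Continuous fun z : EuclideanSpace ℝ (Fin n) => γ₂ / 2 * ‖z‖ ^ 2 := by fun_prop
    exact (h1.add h2).congr fun z => by simp
  -- DCA subgradient relations reindexed
  have hsub : ∀ k : ℕ, (∀ z, h (x k) + ⟪y (k+1), z - x k⟫ ≤ h z) ∧
      (∀ z, g (x (k+1)) + ⟪y (k+1), z - x (k+1)⟫ ≤ g z) := by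
    intro k
    have := hdca (k+1) (Nat.le_add_left 1 k)
    simpa using this
  -- sufficient decrease
  set F : ℕ → ℝ := fun k => g (x k) - h (x k) with hF
  have hdec : ∀ k : ℕ, F (k+1) + (γ₁+γ₂)/2 * ‖x (k+1) - x k‖^2 ≤ F k := by
    intro k
    obtain ⟨h1, h2⟩ := hsub k
    have hA := strong_subgrad h γ₂ hh (x k) (y (k+1)) h1 (x (k+1))
    have hB := strong_subgrad g γ₁ hg (x (k+1)) (y (k+1)) h2 (x k)
    rw [show x k - x (k+1) = -(x (k+1) - x k) by abel, inner_neg_right,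
      norm_neg] at hB
    simp only [hF]
    linarith
  have hanti : Antitone F := antitone_nat_of_succ_le fun k =>
    le_trans (le_add_of_nonneg_right (mul_nonneg (by linarith) (sq_nonneg _))) (hdec k)
  obtain ⟨c, hc⟩ := hbdd
  have hbb : BddBelow (Set.range F) := ⟨c, by rintro _ ⟨k, rfl⟩; exact hc (x k)⟩
  have hFlim : Tendsto F atTop (nhds (⨅ k, F k)) := tendsto_atTop_ciInf hanti hbb
  have hFlim' : Tendsto (fun k => F (k+1)) atTop (nhds (⨅ k, F k)) :=
    hFlim.comp (tendsto_add_atTop_nat 1)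
  have hdiff : Tendsto (fun k => F k - F (k+1)) atTop (nhds 0) := by
    simpa using hFlim.sub hFlim'
  have hsq : Tendsto (fun k => (γ₁+γ₂)/2 * ‖x (k+1) - x k‖^2) atTop (nhds 0) :=
    squeeze_zero (fun k => mul_nonneg (by linarith) (sq_nonneg _))
      (fun k => by linarith [hdec k]) hdiff
  have hsq2 : Tendsto (fun k => ‖x (k+1) - x k‖^2) atTop (nhds 0) := by
    have := hsq.const_mul (2/(γ₁+γ₂))
    rw [mul_zero] at this
    refine this.congr fun k => ?_
    field_simp
  have hnorm : Tendsto (fun k => ‖x (k+1) - x k‖) atTop (nhds 0) := by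
    have := (Real.continuous_sqrt.tendsto 0).comp hsq2
    rw [Real.sqrt_zero] at this
    refine this.congr fun k => ?_
    simp [Real.sqrt_sq (norm_nonneg _)]
  have hd0 : Tendsto (fun k => x (k+1) - x k) atTop (nhds 0) :=
    tendsto_zero_iff_norm_tendsto_zero.2 hnorm
  -- the shifted subsequence also converges to xbar
  have hlim2 : Tendsto (fun j => x (φ j + 1)) atTop (nhds xbar) := by
    have h1 : Tendsto (fun j => x (φ j + 1) - x (φ j)) atTop (nhds 0) :=
      hd0.comp hφ.tendsto_atTop
    have := hlim.add h1
    rw [add_zero] at this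
    refine this.congr fun j => ?_
    abel
  -- bound on y
  obtain ⟨R, hR⟩ := hxbounded.subset_closedBall 0
  have hR0 : 0 ≤ R := by
    have := hR (Set.mem_range_self 0)
    simp [mem_closedBall, dist_eq_norm] at this
    exact le_trans (norm_nonneg _) this
  obtain ⟨C, hC⟩ := (isCompact_closedBall (0 : EuclideanSpace ℝ (Fin n)) (R+1)).exists_bound_of_continuousOn hhc.continuousOn
  have hC0 : 0 ≤ C := le_trans (norm_nonneg (h 0)) (hC 0 (by simp [mem_closedBall]; linarith))
  have hxball : ∀ k, ‖x k‖ ≤ R := fun k => by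
    have := hR (Set.mem_range_self k)
    simpa [mem_closedBall, dist_eq_norm] using this
  have hybd : ∀ k : ℕ, ‖y (k+1)‖ ≤ 2*C := by
    intro k
    rcases eq_or_ne (y (k+1)) 0 with h0 | h0
    · simp [h0]; linarith
    · set u : EuclideanSpace ℝ (Fin n) := ‖y (k+1)‖⁻¹ • y (k+1) with hu
      have hne : ‖y (k+1)‖ ≠ 0 := norm_ne_zero_iff.2 h0
      have hun : ‖u‖ = 1 := by
        rw [hu, norm_smul, norm_inv, norm_norm]
        field_simp
      have hz : ‖x k + u‖ ≤ R + 1 := by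
        calc ‖x k + u‖ ≤ ‖x k‖ + ‖u‖ := norm_add_le _ _
        _ ≤ R + 1 := by rw [hun]; linarith [hxball k]
      have hsg := (hsub k).1 (x k + u)
      have hinner : ⟪y (k+1), (x k + u) - x k⟫ = ‖y (k+1)‖ := by
        rw [show (x k + u) - x k = u by abel, hu, real_inner_smul_right,
          real_inner_self_eq_norm_sq, sq, inv_mul_cancel_left₀ hne]
      rw [hinner] at hsg
      have hb1 : ‖h (x k + u)‖ ≤ C := hC _ (by simpa [mem_closedBall, dist_eq_norm] using hz)
      have hb2 : ‖h (x k)‖ ≤ C := hC _ (by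
        simp only [mem_closedBall, dist_eq_norm, sub_zero]
        linarith [hxball k])
      have := abs_le.1 hb1
      have := abs_le.1 hb2
      simp only [Real.norm_eq_abs] at hb1 hb2
      have h1' := (abs_le.1 hb1).1
      have h1'' := (abs_le.1 hb1).2
      have h2' := (abs_le.1 hb2).1
      linarith
  -- extract convergent subsequence of y
  have hYmem : ∀ j, y (φ j + 1) ∈ closedBall (0 : EuclideanSpace ℝ (Fin n)) (2*C) := fun j =>
    by simpa [mem_closedBall, dist_eq_norm] using hybd (φ j)
  obtain ⟨v, hvmem, ψ, hψ, hYlim⟩ :=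
    (isCompact_closedBall (0 : EuclideanSpace ℝ (Fin n)) (2*C)).tendsto_subseq hYmem
  refine ⟨v, ?_, ?_⟩
  · -- v ∈ ∂g(xbar)
    intro z
    have hxlim : Tendsto (fun i => x (φ (ψ i) + 1)) atTop (nhds xbar) :=
      hlim2.comp hψ.tendsto_atTop
    have hL : Tendsto (fun i => g (x (φ (ψ i) + 1)) + ⟪y (φ (ψ i) + 1), z - x (φ (ψ i) + 1)⟫)
        atTop (nhds (g xbar + ⟪v, z - xbar⟫)) := by
      exact ((hgc.tendsto xbar).comp hxlim).add
        (hYlim.inner (tendsto_const_nhds.sub hxlim))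
    refine le_of_tendsto hL (Eventually.of_forall fun i => ?_)
    exact (hsub (φ (ψ i))).2 z
  · -- v ∈ ∂h(xbar)
    intro z
    have hxlim : Tendsto (fun i => x (φ (ψ i))) atTop (nhds xbar) :=
      hlim.comp hψ.tendsto_atTop
    have hL : Tendsto (fun i => h (x (φ (ψ i))) + ⟪y (φ (ψ i) + 1), z - x (φ (ψ i))⟫)
        atTop (nhds (h xbar + ⟪v, z - xbar⟫)) := by
      exact ((hhc.tendsto xbar).comp hxlim).add
        (hYlim.inner (tendsto_const_nhds.sub hxlim))
    refine le_of_tendsto hL (Eventually.of_forall fun i => ?_)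
    exact (hsub (φ (ψ i))).1 z
end

section
/- For any λ > 0 and μ > 0, the smoothed Model I objective f_μ attains an absolute (global) minimum on (ℝⁿ)^k, i.e., there exists (x̄¹,…,x̄^k) ∈ (ℝⁿ)^k with f_μ(x̄¹,…,x̄^k) ≤ f_μ(x¹,…,x^k) for all x¹,…,x^k ∈ ℝⁿ. -/
open scoped RealInnerProductSpace

/-- The support function `σ_F` of a set `F ⊆ ℝⁿ`. -/
noncomputable def suppF {n : ℕ} (F : Set (EuclideanSpace ℝ (Fin n)))
    (x : EuclideanSpace ℝ (Fin n)) : ℝ :=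
  sSup ((fun y => ⟪x, y⟫) '' F)

/-- Minimum of finitely many real numbers indexed by `Fin m`, `m ≥ 1`. -/
noncomputable def fmin {m : ℕ} (hm : 1 ≤ m) (α : Fin m → ℝ) : ℝ :=
  Finset.univ.inf' (Finset.univ_nonempty_iff.mpr ⟨⟨0, hm⟩⟩) α

/-- Maximum of finitely many real numbers indexed by `Fin m`, `m ≥ 1`. -/
noncomputable def fmax {m : ℕ} (hm : 1 ≤ m) (α : Fin m → ℝ) : ℝ :=
  Finset.univ.sup' (Finset.univ_nonempty_iff.mpr ⟨⟨0, hm⟩⟩) α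

section aux
variable {n : ℕ} {F : Set (EuclideanSpace ℝ (Fin n))}

lemma suppF_bddAbove (hFb : Bornology.IsBounded F) (x : EuclideanSpace ℝ (Fin n)) :
    BddAbove ((fun y => ⟪x, y⟫) '' F) := by
  obtain ⟨R, hR⟩ := isBounded_iff_forall_norm_le.mp hFb
  refine ⟨‖x‖ * R, ?_⟩
  rintro r ⟨y, hy, rfl⟩
  calc ⟪x, y⟫ ≤ ‖x‖ * ‖y‖ := real_inner_le_norm x y
    _ ≤ ‖x‖ * R := mul_le_mul_of_nonneg_left (hR y hy) (norm_nonneg x)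

lemma le_suppF (hFb : Bornology.IsBounded F) {y : EuclideanSpace ℝ (Fin n)} (hy : y ∈ F)
    (x : EuclideanSpace ℝ (Fin n)) : ⟪x, y⟫ ≤ suppF F x :=
  le_csSup (suppF_bddAbove hFb x) ⟨y, hy, rfl⟩

lemma suppF_le (hF : F.Nonempty) {x : EuclideanSpace ℝ (Fin n)} {B : ℝ}
    (h : ∀ y ∈ F, ⟪x, y⟫ ≤ B) : suppF F x ≤ B := by
  refine csSup_le (hF.image _) ?_
  rintro r ⟨y, hy, rfl⟩
  exact h y hy

lemma suppF_smul (hF : F.Nonempty) (hFb : Bornology.IsBounded F) {c : ℝ} (hc : 0 < c)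
    (x : EuclideanSpace ℝ (Fin n)) : suppF F (c • x) = c * suppF F x := by
  refine le_antisymm ?_ ?_
  · refine suppF_le hF fun y hy => ?_
    rw [real_inner_smul_left]
    exact mul_le_mul_of_nonneg_left (le_suppF hFb hy x) hc.le
  · have h : suppF F x ≤ c⁻¹ * suppF F (c • x) := by
      refine suppF_le hF fun y hy => ?_
      have h2 := le_suppF hFb hy (c • x)
      rw [real_inner_smul_left] at h2
      rw [← mul_le_mul_iff_right₀ hc]
      calc c * ⟪x, y⟫ ≤ suppF F (c • x) := h2
        _ = c * (c⁻¹ * suppF F (c • x)) := by field_simp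
    calc c * suppF F x ≤ c * (c⁻¹ * suppF F (c • x)) :=
          mul_le_mul_of_nonneg_left h hc.le
      _ = suppF F (c • x) := by field_simp

lemma suppF_continuous (hF : F.Nonempty) (hFb : Bornology.IsBounded F) :
    Continuous (suppF F) := by
  obtain ⟨R, hR⟩ := isBounded_iff_forall_norm_le.mp hFb
  have hkey : ∀ x x' : EuclideanSpace ℝ (Fin n),
      suppF F x ≤ suppF F x' + (max R 0) * ‖x - x'‖ := by
    intro x x'
    refine suppF_le hF fun y hy => ?_
    have : ⟪x, y⟫ = ⟪x', y⟫ + ⟪x - x', y⟫ := by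
      rw [← inner_add_left]
      congr 1
      abel
    rw [this]
    have h1 : ⟪x', y⟫ ≤ suppF F x' := le_suppF hFb hy x'
    have h2 : ⟪x - x', y⟫ ≤ ‖x - x'‖ * ‖y‖ := real_inner_le_norm _ _
    have h3 : ‖x - x'‖ * ‖y‖ ≤ (max R 0) * ‖x - x'‖ := by
      rw [mul_comm]
      exact mul_le_mul ((hR y hy).trans (le_max_left _ _)) le_rfl (norm_nonneg _)
        (le_max_right _ _)
    linarith
  refine (LipschitzWith.of_dist_le_mul (K := (max R 0).toNNReal) fun x x' => ?_).continuous
  rw [Real.dist_eq, Real.coe_toNNReal _ (le_max_right R 0), abs_sub_le_iff, dist_eq_norm]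
  constructor
  · linarith [hkey x x']
  · have := hkey x' x
    rw [norm_sub_rev] at this
    linarith

lemma fmax_le {m : ℕ} (hm : 1 ≤ m) {α : Fin m → ℝ} {B : ℝ} (h : ∀ t, α t ≤ B) :
    fmax hm α ≤ B :=
  Finset.sup'_le _ _ fun t _ => h t

end aux

theorem stmt_11 {n m k : ℕ} (hm : 1 ≤ m) (hk : 1 ≤ k)
    (a : Fin m → EuclideanSpace ℝ (Fin n))
    (F : Set (EuclideanSpace ℝ (Fin n)))
    (hF : F.Nonempty) (hFc : IsClosed F) (hFb : Bornology.IsBounded F)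
    (hFconv : Convex ℝ F) (hF0 : (0 : EuclideanSpace ℝ (Fin n)) ∈ interior F)
    (lam μ : ℝ) (hlam : 0 < lam) (hμ : 0 < μ) :
    ∃ Xbar : Fin k → EuclideanSpace ℝ (Fin n),
      ∀ X : Fin k → EuclideanSpace ℝ (Fin n),
        (((2 + lam) * μ / 2) * ∑ i, ∑ ℓ, ‖μ⁻¹ • (Xbar ℓ - a i)‖ ^ 2
            - ((2 + lam) * μ / 2) * ∑ i, ∑ ℓ, (Metric.infDist (μ⁻¹ • (Xbar ℓ - a i)) F) ^ 2
            - ∑ i, fmax hk (fun t => ∑ ℓ ∈ Finset.univ.erase t, suppF F (Xbar ℓ - a i))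
            - lam * ∑ ℓ, fmax hm (fun t => ∑ i ∈ Finset.univ.erase t, suppF F (Xbar ℓ - a i))
            - fmax hm (fun t => ∑ i ∈ Finset.univ.erase t, ∑ ℓ, suppF F (Xbar ℓ - a i)))
          ≤ (((2 + lam) * μ / 2) * ∑ i, ∑ ℓ, ‖μ⁻¹ • (X ℓ - a i)‖ ^ 2
            - ((2 + lam) * μ / 2) * ∑ i, ∑ ℓ, (Metric.infDist (μ⁻¹ • (X ℓ - a i)) F) ^ 2
            - ∑ i, fmax hk (fun t => ∑ ℓ ∈ Finset.univ.erase t, suppF F (X ℓ - a i))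
            - lam * ∑ ℓ, fmax hm (fun t => ∑ i ∈ Finset.univ.erase t, suppF F (X ℓ - a i))
            - fmax hm (fun t => ∑ i ∈ Finset.univ.erase t, ∑ ℓ, suppF F (X ℓ - a i))) := by
  classical
  set f : (Fin k → EuclideanSpace ℝ (Fin n)) → ℝ := fun X =>
    ((2 + lam) * μ / 2) * ∑ i, ∑ ℓ, ‖μ⁻¹ • (X ℓ - a i)‖ ^ 2
      - ((2 + lam) * μ / 2) * ∑ i, ∑ ℓ, (Metric.infDist (μ⁻¹ • (X ℓ - a i)) F) ^ 2
      - ∑ i, fmax hk (fun t => ∑ ℓ ∈ Finset.univ.erase t, suppF F (X ℓ - a i))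
      - lam * ∑ ℓ, fmax hm (fun t => ∑ i ∈ Finset.univ.erase t, suppF F (X ℓ - a i))
      - fmax hm (fun t => ∑ i ∈ Finset.univ.erase t, ∑ ℓ, suppF F (X ℓ - a i)) with hf
  suffices h : ∃ Xbar, ∀ X, f Xbar ≤ f X by
    obtain ⟨Xbar, hXbar⟩ := h
    exact ⟨Xbar, fun X => hXbar X⟩
  -- basic constants
  have h0F : (0 : EuclideanSpace ℝ (Fin n)) ∈ F := interior_subset hF0
  obtain ⟨R, hR0, hR⟩ : ∃ R : ℝ, 0 ≤ R ∧ ∀ y ∈ F, ‖y‖ ≤ R := by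
    obtain ⟨R, hR⟩ := isBounded_iff_forall_norm_le.mp hFb
    exact ⟨max R 0, le_max_right _ _, fun y hy => (hR y hy).trans (le_max_left _ _)⟩
  obtain ⟨ε, hε, hball⟩ : ∃ ε > 0, Metric.ball (0 : EuclideanSpace ℝ (Fin n)) ε ⊆ F := by
    rw [mem_interior_iff_mem_nhds] at hF0
    exact Metric.mem_nhds_iff.mp hF0
  set c : ℝ := ε / 2 with hc_def
  have hc : 0 < c := by positivity
  have hσ0 : ∀ v : EuclideanSpace ℝ (Fin n), 0 ≤ suppF F v := by
    intro v
    have := le_suppF hFb h0F v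
    simpa using this
  have hcσ : ∀ v : EuclideanSpace ℝ (Fin n), c * ‖v‖ ≤ suppF F v := by
    intro v
    rcases eq_or_ne v 0 with rfl | hv
    · simpa using hσ0 0
    · have hvn : (0 : ℝ) < ‖v‖ := norm_pos_iff.mpr hv
      have hyF : (c / ‖v‖) • v ∈ F := by
        apply hball
        rw [Metric.mem_ball, dist_zero_right, norm_smul]
        have : ‖(c / ‖v‖ : ℝ)‖ = c / ‖v‖ := by
          rw [Real.norm_eq_abs, abs_of_pos (by positivity)]
        rw [this]
        calc c / ‖v‖ * ‖v‖ = c := by field_simp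
          _ < ε := by rw [hc_def]; linarith
      have h2 := le_suppF hFb hyF v
      rw [real_inner_smul_right, real_inner_self_eq_norm_sq] at h2
      calc c * ‖v‖ = c / ‖v‖ * ‖v‖ ^ 2 := by field_simp
        _ ≤ suppF F v := h2
  -- key pointwise Moreau-type lower bound
  have hkey : ∀ v : EuclideanSpace ℝ (Fin n),
      suppF F v - μ * R ^ 2 / 2 ≤
        μ / 2 * (‖μ⁻¹ • v‖ ^ 2 - (Metric.infDist (μ⁻¹ • v) F) ^ 2) := by
    intro v
    set z : EuclideanSpace ℝ (Fin n) := μ⁻¹ • v with hz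
    have hσz : suppF F z ≤ (‖z‖ ^ 2 - (Metric.infDist z F) ^ 2 + R ^ 2) / 2 := by
      refine suppF_le hF fun y hy => ?_
      have h1 : Metric.infDist z F ≤ ‖z - y‖ := by
        rw [← dist_eq_norm]; exact Metric.infDist_le_dist_of_mem hy
      have h2 : (Metric.infDist z F) ^ 2 ≤ ‖z - y‖ ^ 2 :=
        pow_le_pow_left₀ Metric.infDist_nonneg h1 2
      rw [norm_sub_sq_real] at h2
      have hy2 : ‖y‖ ^ 2 ≤ R ^ 2 := pow_le_pow_left₀ (norm_nonneg _) (hR y hy) 2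
      linarith
    have hzv : suppF F v = μ * suppF F z := by
      rw [hz, suppF_smul hF hFb (inv_pos.mpr hμ)]
      field_simp
    rw [hzv]
    have := mul_le_mul_of_nonneg_left hσz hμ.le
    nlinarith
  -- the bound A on the nodes
  set A : ℝ := ∑ i, ‖a i‖ with hA_def
  have hA : ∀ t, ‖a t‖ ≤ A :=
    fun t => Finset.single_le_sum (f := fun i => ‖a i‖) (fun i _ => norm_nonneg _)
      (Finset.mem_univ t)
  -- lower bound constant
  set C0 : ℝ := (2 + lam) * ((m : ℝ) * (k : ℝ) * (μ * R ^ 2 / 2)) + lam * (c * A * (k : ℝ))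
    with hC0
  -- coercive lower bound
  have hlb : ∀ X : Fin k → EuclideanSpace ℝ (Fin n), lam * c * ‖X‖ - C0 ≤ f X := by
    intro X
    set S : ℝ := ∑ i, ∑ ℓ, suppF F (X ℓ - a i) with hS
    set N : ℝ := ∑ ℓ, ‖X ℓ‖ with hN_def
    -- term 1
    have hbig : S - (m : ℝ) * (k : ℝ) * (μ * R ^ 2 / 2) ≤
        μ / 2 * (∑ i, ∑ ℓ, ‖μ⁻¹ • (X ℓ - a i)‖ ^ 2
          - ∑ i, ∑ ℓ, (Metric.infDist (μ⁻¹ • (X ℓ - a i)) F) ^ 2) := by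
      have h1 : ∑ i, ∑ ℓ, (suppF F (X ℓ - a i) - μ * R ^ 2 / 2) ≤
          ∑ i, ∑ ℓ, (μ / 2 * (‖μ⁻¹ • (X ℓ - a i)‖ ^ 2
            - (Metric.infDist (μ⁻¹ • (X ℓ - a i)) F) ^ 2)) :=
        Finset.sum_le_sum fun i _ => Finset.sum_le_sum fun ℓ _ => hkey _
      have h2 : ∑ i : Fin m, ∑ ℓ : Fin k, (suppF F (X ℓ - a i) - μ * R ^ 2 / 2) =
          S - (m : ℝ) * (k : ℝ) * (μ * R ^ 2 / 2) := by
        simp [Finset.sum_sub_distrib, Finset.sum_const, Finset.card_univ, hS]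
        ring
      have h3 : ∑ i : Fin m, ∑ ℓ : Fin k, (μ / 2 * (‖μ⁻¹ • (X ℓ - a i)‖ ^ 2
            - (Metric.infDist (μ⁻¹ • (X ℓ - a i)) F) ^ 2)) =
          μ / 2 * (∑ i, ∑ ℓ, ‖μ⁻¹ • (X ℓ - a i)‖ ^ 2
            - ∑ i, ∑ ℓ, (Metric.infDist (μ⁻¹ • (X ℓ - a i)) F) ^ 2) := by
        simp only [mul_sub, Finset.sum_sub_distrib, ← Finset.mul_sum]
      rw [h2, h3] at h1
      exact h1
    have hT1 : (2 + lam) * (S - (m : ℝ) * (k : ℝ) * (μ * R ^ 2 / 2)) ≤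
        ((2 + lam) * μ / 2) * ∑ i, ∑ ℓ, ‖μ⁻¹ • (X ℓ - a i)‖ ^ 2
          - ((2 + lam) * μ / 2) * ∑ i, ∑ ℓ, (Metric.infDist (μ⁻¹ • (X ℓ - a i)) F) ^ 2 := by
      calc (2 + lam) * (S - (m : ℝ) * (k : ℝ) * (μ * R ^ 2 / 2))
          ≤ (2 + lam) * (μ / 2 * (∑ i, ∑ ℓ, ‖μ⁻¹ • (X ℓ - a i)‖ ^ 2
            - ∑ i, ∑ ℓ, (Metric.infDist (μ⁻¹ • (X ℓ - a i)) F) ^ 2)) :=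
            mul_le_mul_of_nonneg_left hbig (by linarith)
        _ = ((2 + lam) * μ / 2) * ∑ i, ∑ ℓ, ‖μ⁻¹ • (X ℓ - a i)‖ ^ 2
            - ((2 + lam) * μ / 2) * ∑ i, ∑ ℓ, (Metric.infDist (μ⁻¹ • (X ℓ - a i)) F) ^ 2 := by
            ring
    -- term 2
    have hT2 : ∑ i, fmax hk (fun t => ∑ ℓ ∈ Finset.univ.erase t, suppF F (X ℓ - a i)) ≤ S := by
      rw [hS]
      refine Finset.sum_le_sum fun i _ => fmax_le hk fun t => ?_
      exact Finset.sum_le_sum_of_subset_of_nonneg (Finset.erase_subset _ _)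
        (fun ℓ _ _ => hσ0 _)
    -- term 4
    have hT4 : fmax hm (fun t => ∑ i ∈ Finset.univ.erase t, ∑ ℓ, suppF F (X ℓ - a i)) ≤ S := by
      rw [hS]
      refine fmax_le hm fun t => ?_
      exact Finset.sum_le_sum_of_subset_of_nonneg (Finset.erase_subset _ _)
        (fun i _ _ => Finset.sum_nonneg fun ℓ _ => hσ0 _)
    -- term 3
    have hT3 : ∀ ℓ, fmax hm (fun t => ∑ i ∈ Finset.univ.erase t, suppF F (X ℓ - a i)) ≤
        (∑ i, suppF F (X ℓ - a i)) - c * ‖X ℓ‖ + c * A := by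
      intro ℓ
      refine fmax_le hm fun t => ?_
      have he : ∑ i ∈ Finset.univ.erase t, suppF F (X ℓ - a i) =
          (∑ i, suppF F (X ℓ - a i)) - suppF F (X ℓ - a t) := by
        rw [← Finset.sum_erase_add Finset.univ _ (Finset.mem_univ t)]
        ring
      rw [he]
      have h1 : c * ‖X ℓ‖ - c * A ≤ suppF F (X ℓ - a t) := by
        have h2 := hcσ (X ℓ - a t)
        have h3 : ‖X ℓ‖ - ‖a t‖ ≤ ‖X ℓ - a t‖ := norm_sub_norm_le _ _
        have h4 : c * (‖X ℓ‖ - ‖a t‖) ≤ c * ‖X ℓ - a t‖ :=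
          mul_le_mul_of_nonneg_left h3 hc.le
        have h5 : c * ‖a t‖ ≤ c * A := mul_le_mul_of_nonneg_left (hA t) hc.le
        nlinarith
      linarith
    have hT3sum : ∑ ℓ, fmax hm (fun t => ∑ i ∈ Finset.univ.erase t, suppF F (X ℓ - a i)) ≤
        S - c * N + c * A * (k : ℝ) := by
      have h1 : ∑ ℓ, fmax hm (fun t => ∑ i ∈ Finset.univ.erase t, suppF F (X ℓ - a i)) ≤
          ∑ ℓ, ((∑ i, suppF F (X ℓ - a i)) - c * ‖X ℓ‖ + c * A) :=
        Finset.sum_le_sum fun ℓ _ => hT3 ℓ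
      have h2 : ∑ ℓ : Fin k, ((∑ i, suppF F (X ℓ - a i)) - c * ‖X ℓ‖ + c * A) =
          S - c * N + c * A * (k : ℝ) := by
        have hswap : ∑ ℓ : Fin k, ∑ i : Fin m, suppF F (X ℓ - a i) =
            ∑ i : Fin m, ∑ ℓ : Fin k, suppF F (X ℓ - a i) := Finset.sum_comm
        rw [hS, hN_def, Finset.sum_add_distrib, Finset.sum_sub_distrib, hswap,
          Finset.sum_const, Finset.card_univ, Fintype.card_fin, ← Finset.mul_sum,
          nsmul_eq_mul]
        ring
      linarith
    have hTm : lam * ∑ ℓ, fmax hm (fun t => ∑ i ∈ Finset.univ.erase t, suppF F (X ℓ - a i)) ≤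
        lam * (S - c * N + c * A * (k : ℝ)) :=
      mul_le_mul_of_nonneg_left hT3sum hlam.le
    have hNX : ‖X‖ ≤ N := by
      rw [hN_def]
      refine (pi_norm_le_iff_of_nonneg (Finset.sum_nonneg fun ℓ _ => norm_nonneg _)).mpr
        fun ℓ => Finset.single_le_sum (f := fun j => ‖X j‖) (fun j _ => norm_nonneg _)
          (Finset.mem_univ ℓ)
    have hNlc : lam * c * ‖X‖ ≤ lam * c * N :=
      mul_le_mul_of_nonneg_left hNX (by positivity)
    rw [hf]
    calc lam * c * ‖X‖ - C0 ≤ lam * c * N - C0 := by linarith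
      _ = (2 + lam) * (S - (m : ℝ) * (k : ℝ) * (μ * R ^ 2 / 2)) - S
            - lam * (S - c * N + c * A * (k : ℝ)) - S := by
          rw [hC0]; ring
      _ ≤ _ := by
          simp only []
          linarith [hT1, hT2, hT4, hTm]
  -- continuity
  have hσc : Continuous (suppF F) := suppF_continuous hF hFb
  have hev : ∀ (ℓ : Fin k) (i : Fin m),
      Continuous fun X : Fin k → EuclideanSpace ℝ (Fin n) => X ℓ - a i :=
    fun ℓ i => (continuous_apply ℓ).sub continuous_const
  have hcont : Continuous f := by
    rw [hf]
    unfold fmax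
    refine Continuous.sub (Continuous.sub (Continuous.sub (Continuous.sub ?_ ?_) ?_) ?_) ?_
    · exact continuous_const.mul (continuous_finset_sum _ fun i _ =>
        continuous_finset_sum _ fun ℓ _ => (((hev ℓ i).const_smul μ⁻¹).norm.pow 2))
    · exact continuous_const.mul (continuous_finset_sum _ fun i _ =>
        continuous_finset_sum _ fun ℓ _ =>
          (((Metric.continuous_infDist_pt F).comp ((hev ℓ i).const_smul μ⁻¹)).pow 2))
    · exact continuous_finset_sum _ fun i _ => Continuous.finset_sup'_apply _
        (fun t _ => continuous_finset_sum _ fun ℓ _ => hσc.comp (hev ℓ i))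
    · exact continuous_const.mul (continuous_finset_sum _ fun ℓ _ =>
        Continuous.finset_sup'_apply _ fun t _ =>
          continuous_finset_sum _ fun i _ => hσc.comp (hev ℓ i))
    · exact Continuous.finset_sup'_apply _ fun t _ =>
        continuous_finset_sum _ fun i _ => continuous_finset_sum _ fun ℓ _ =>
          hσc.comp (hev ℓ i)
  -- coercivity
  have hcoer : Filter.Tendsto f (Filter.cocompact _) Filter.atTop := by
    have h1 : Filter.Tendsto (fun X : Fin k → EuclideanSpace ℝ (Fin n) =>
        lam * c * ‖X‖ - C0) (Filter.cocompact _) Filter.atTop := by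
      have h2 : Filter.Tendsto (fun X : Fin k → EuclideanSpace ℝ (Fin n) => lam * c * ‖X‖)
          (Filter.cocompact _) Filter.atTop :=
        (tendsto_norm_cocompact_atTop).const_mul_atTop (by positivity)
      simpa [sub_eq_add_neg] using Filter.tendsto_atTop_add_const_right _ (-C0) h2
    exact Filter.tendsto_atTop_mono hlb h1
  exact hcont.exists_forall_le hcoer
end
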